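/- Proposition 3, part 1 (maps with invariant frame fields are left-equivariant). Let U : ℝ³ → G be a smooth map such that ∂_y(U⁻¹∂_μU) = 0 identically for every μ ∈ {x,y,t} (i.e. the frame field K_μ := U⁻¹∂_μU is independent of y). Then there exist a constant element L ∈ 𝔤 and a smooth map V : ℝ² → G such that U(x,y,t) = exp(yL)·V(x,t) for all (x,y,t) ∈ ℝ³. -/

import Mathlib

/-!
STATEMENT 10 (Proposition 3, part 1): a smooth map `U : ℝ³ → G` whose frame
field is independent of `y` has the left-equivariant form
`U(x,y,t) = exp(yL)·V(x,t)`.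
-/

open scoped BigOperators

attribute [local instance] Matrix.linftyOpNormedAddCommGroup Matrix.linftyOpNormedSpace
  Matrix.linftyOpNormedRing Matrix.linftyOpNormedAlgebra

attribute [local instance] LieRing.ofAssociativeRing LieAlgebra.ofAssociativeAlgebra

noncomputable section

abbrev Mat (N : ℕ) := Matrix (Fin N) (Fin N) ℝ

/-- Directional derivative. -/
def pd {E F : Type*} [NormedAddCommGroup E] [NormedSpace ℝ E]
    [NormedAddCommGroup F] [NormedSpace ℝ F] (d : E) (f : E → F) (z : E) : F :=
  fderiv ℝ f z d

/-- The coordinate directions `x, y, t` on `ℝ^{2+1} = ℝ³`. -/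
def dir3 : Fin 3 → ℝ × ℝ × ℝ := ![(1, 0, 0), (0, 1, 0), (0, 0, 1)]

/-- The frame field `K_μ = Ψ⁻¹ ∂_μ Ψ` of a map `Ψ : ℝ³ → GL(N,ℝ)`,
in the direction `d`. -/
def Kf {N : ℕ} (Ψ : ℝ × ℝ × ℝ → Mat N) (d : ℝ × ℝ × ℝ) (z : ℝ × ℝ × ℝ) : Mat N :=
  Ring.inverse (Ψ z) * fderiv ℝ Ψ z d

/-- **Proposition 3, part 1: maps with invariant frame fields are
left-equivariant.** -/
theorem invariant_frame_field_implies_left_equivariant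
    {N : ℕ}
    -- `G`, a closed subgroup of `GL(N,ℝ)`
    (GSet : Set (Mat N))
    (hG1 : (1 : Mat N) ∈ GSet)
    (hGmul : ∀ a ∈ GSet, ∀ b ∈ GSet, a * b ∈ GSet)
    (hGinv : ∀ a ∈ GSet, IsUnit a ∧ Ring.inverse a ∈ GSet)
    (hGclosed : IsClosed {u : (Mat N)ˣ | (u : Mat N) ∈ GSet})
    -- `𝔤`, the Lie algebra of `G`
    (𝔤 : LieSubalgebra ℝ (Mat N))
    (hLie : ∀ A : Mat N, A ∈ 𝔤 ↔ ∀ s : ℝ, NormedSpace.exp (s • A) ∈ GSet)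
    -- a smooth map `U : ℝ³ → G` whose frame field is independent of `y`
    (U : ℝ × ℝ × ℝ → Mat N) (hU : ContDiff ℝ (⊤ : ℕ∞) U) (hUG : ∀ z, U z ∈ GSet)
    (hinv : ∀ μ : Fin 3, ∀ z : ℝ × ℝ × ℝ, pd (dir3 1) (Kf U (dir3 μ)) z = 0) :
    ∃ L ∈ 𝔤, ∃ V : ℝ × ℝ → Mat N,
      ContDiff ℝ (⊤ : ℕ∞) V ∧ (∀ q, V q ∈ GSet) ∧
      ∀ x y t : ℝ, U (x, y, t) = NormedSpace.exp (y • L) * V (x, t) := by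
  classical
  letI : TopologicalSpace (Mat N) := PseudoMetricSpace.toUniformSpace.toTopologicalSpace
  have hUdiff : Differentiable ℝ U := hU.differentiable (by simp)
  have hu : ∀ z, IsUnit (U z) := fun z => (hGinv _ (hUG z)).1
  set Ui : (ℝ × ℝ × ℝ) → Mat N := fun z => Ring.inverse (U z) with hUi
  have hco : ∀ z, ((hu z).unit⁻¹ : (Mat N)ˣ) = (Ui z : Mat N) := by
    intro z
    rw [hUi]
    simp only
    rw [← Ring.inverse_unit, (hu z).unit_spec]
  have hUiU : ∀ z, Ui z * U z = 1 := fun z => Ring.inverse_mul_cancel _ (hu z)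
  have hUUi : ∀ z, U z * Ui z = 1 := fun z => Ring.mul_inverse_cancel _ (hu z)
  set DU : (ℝ × ℝ × ℝ) → (ℝ × ℝ × ℝ) →L[ℝ] Mat N := fderiv ℝ U with hDU
  have hDUc : ContDiff ℝ (⊤ : ℕ∞) DU := hU.fderiv_right (m := (⊤ : ℕ∞)) (by norm_cast)
  have hDUdiff : Differentiable ℝ DU := hDUc.differentiable (by simp)
  -- derivative of the pointwise inverse
  have hUiF : ∀ z, HasFDerivAt Ui
      ((-(ContinuousLinearMap.mulLeftRight ℝ (Mat N) (Ui z) (Ui z))).comp (DU z)) z := by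
    intro z
    have h1 : HasFDerivAt Ring.inverse
        (-(ContinuousLinearMap.mulLeftRight ℝ (Mat N) (Ui z) (Ui z))) (U z) := by
      have h := hasFDerivAt_ringInverse (𝕜 := ℝ) (hu z).unit
      rw [hco z, (hu z).unit_spec] at h
      exact h
    exact h1.comp z (hUdiff z).hasFDerivAt
  -- derivative of the directional derivative
  have hDUv : ∀ (v : ℝ × ℝ × ℝ) z, HasFDerivAt (fun z => DU z v)
      ((ContinuousLinearMap.apply ℝ (Mat N) v).comp (fderiv ℝ DU z)) z := fun v z =>
    (ContinuousLinearMap.apply ℝ (Mat N) v).hasFDerivAt.comp z (hDUdiff z).hasFDerivAt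
  have hsymm : ∀ z v w, fderiv ℝ DU z v w = fderiv ℝ DU z w v := fun z v w =>
    second_derivative_symmetric (f := U) (fun y => (hUdiff y).hasFDerivAt)
      (hDUdiff z).hasFDerivAt v w
  -- the key mixed-derivative identity
  have hKey : ∀ (μ : Fin 3) z, fderiv ℝ DU z (dir3 1) (dir3 μ)
      = DU z (dir3 1) * (Ui z * DU z (dir3 μ)) := by
    intro μ z
    have h := hinv μ z
    simp only [pd] at h
    have hKfeq : Kf U (dir3 μ) = fun y => Ui y * DU y (dir3 μ) := rfl
    rw [hKfeq] at h
    have hprod := ((hUiF z).mul' (hDUv (dir3 μ) z)).fderiv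
    rw [show (fun y => Ui y * DU y (dir3 μ)) = Ui * fun z => DU z (dir3 μ) from rfl, hprod] at h
    simp only [ContinuousLinearMap.add_apply, ContinuousLinearMap.smul_apply,
      ContinuousLinearMap.smulRight_apply, ContinuousLinearMap.comp_apply,
      ContinuousLinearMap.apply_apply, ContinuousLinearMap.neg_apply,
      ContinuousLinearMap.mulLeftRight_apply, smul_eq_mul, MulOpposite.smul_eq_mul_unop, MulOpposite.unop_op, neg_mul] at h
    rw [add_neg_eq_zero] at h
    -- h : Ui z * f'' = Ui z * DU z e2 * Ui z * DU z eμ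
    calc fderiv ℝ DU z (dir3 1) (dir3 μ)
        = (U z * Ui z) * fderiv ℝ DU z (dir3 1) (dir3 μ) := by rw [hUUi, one_mul]
      _ = U z * (Ui z * fderiv ℝ DU z (dir3 1) (dir3 μ)) := by rw [mul_assoc]
      _ = U z * (Ui z * DU z (dir3 1) * Ui z * DU z (dir3 μ)) := by rw [h]
      _ = (U z * Ui z) * (DU z (dir3 1) * (Ui z * DU z (dir3 μ))) := by
          simp only [mul_assoc]
      _ = DU z (dir3 1) * (Ui z * DU z (dir3 μ)) := by rw [hUUi, one_mul]
  -- the left current A = (∂_y U) U⁻¹ is constant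
  set A : (ℝ × ℝ × ℝ) → Mat N := fun z => DU z (dir3 1) * Ui z with hA
  have hAF : ∀ z, HasFDerivAt A
      (DU z (dir3 1) • ((-(ContinuousLinearMap.mulLeftRight ℝ (Mat N) (Ui z) (Ui z))).comp (DU z))
        + (MulOpposite.op (Ui z) • ((ContinuousLinearMap.apply ℝ (Mat N) (dir3 1)).comp
            (fderiv ℝ DU z)))) z :=
    fun z => (hDUv (dir3 1) z).mul' (hUiF z)
  have hA0 : ∀ z, fderiv ℝ A z = 0 := by
    intro z
    rw [(hAF z).fderiv]
    have hbasis : ∀ μ : Fin 3,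
        (DU z (dir3 1) • ((-(ContinuousLinearMap.mulLeftRight ℝ (Mat N) (Ui z) (Ui z))).comp (DU z))
          + (MulOpposite.op (Ui z) • ((ContinuousLinearMap.apply ℝ (Mat N) (dir3 1)).comp
              (fderiv ℝ DU z)))) (dir3 μ) = 0 := by
      intro μ
      simp only [ContinuousLinearMap.add_apply, ContinuousLinearMap.smul_apply,
        ContinuousLinearMap.smulRight_apply, ContinuousLinearMap.comp_apply,
        ContinuousLinearMap.apply_apply, ContinuousLinearMap.neg_apply,
        ContinuousLinearMap.mulLeftRight_apply, smul_eq_mul, MulOpposite.smul_eq_mul_unop, MulOpposite.unop_op]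
      rw [hsymm z (dir3 μ) (dir3 1), hKey μ z]
      simp only [mul_neg, mul_assoc, neg_add_cancel]
    apply ContinuousLinearMap.ext
    rintro ⟨a, b, c⟩
    have hw : ((a, b, c) : ℝ × ℝ × ℝ) = a • dir3 0 + b • dir3 1 + c • dir3 2 := by
      simp [dir3, Prod.ext_iff]
    rw [hw]
    simp only [map_add, map_smul, hbasis, smul_zero, add_zero, ContinuousLinearMap.zero_apply]
  have hAdiff : Differentiable ℝ A := fun z => (hAF z).differentiableAt
  set L : Mat N := A (0, 0, 0) with hL
  have hLU : ∀ z, DU z (dir3 1) = L * U z := by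
    intro z
    have hAz : A z = L := is_const_of_fderiv_eq_zero hAdiff hA0 z (0, 0, 0)
    calc DU z (dir3 1) = DU z (dir3 1) * (Ui z * U z) := by rw [hUiU, mul_one]
      _ = (DU z (dir3 1) * Ui z) * U z := by rw [mul_assoc]
      _ = A z * U z := rfl
      _ = L * U z := by rw [hAz]
  -- solve the ODE ∂_y U = L U
  have key : ∀ x y t : ℝ, U (x, y, t) = NormedSpace.exp (y • L) * U (x, 0, t) := by
    intro x y t
    set W : ℝ → Mat N := fun s => NormedSpace.exp (s • (-L)) * U (x, s, t) with hW
    have hWd : ∀ s, HasDerivAt W 0 s := by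
      intro s
      have h1 : HasDerivAt (fun s : ℝ => NormedSpace.exp (s • (-L)))
          (NormedSpace.exp (s • (-L)) * (-L)) s := hasDerivAt_exp_smul_const (-L) s
      have hc : HasDerivAt (fun s : ℝ => ((x, s, t) : ℝ × ℝ × ℝ)) ((0 : ℝ), (1 : ℝ), (0 : ℝ)) s :=
        (hasDerivAt_const s x).prodMk ((hasDerivAt_id s).prodMk (hasDerivAt_const s t))
      have h2 : HasDerivAt (fun s : ℝ => U (x, s, t)) (DU (x, s, t) (dir3 1)) s := by
        have h := (hUdiff (x, s, t)).hasFDerivAt.comp_hasDerivAt s hc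
        exact h
      have h3 := h1.mul h2
      have h4 : NormedSpace.exp (s • (-L)) * (-L) * U (x, s, t)
          + NormedSpace.exp (s • (-L)) * DU (x, s, t) (dir3 1) = 0 := by
        rw [hLU (x, s, t)]
        simp only [neg_mul, mul_neg, mul_assoc, neg_add_cancel]
      rw [h4] at h3
      exact h3
    have hWc : W y = W 0 :=
      is_const_of_deriv_eq_zero (fun s => (hWd s).differentiableAt)
        (fun s => (hWd s).deriv) y 0
    have h0 : W 0 = U (x, 0, t) := by
      rw [hW]; simp [NormedSpace.exp_zero]
    have hyy : NormedSpace.exp (y • L) * W y = U (x, y, t) := by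
      rw [hW]
      simp only
      rw [← mul_assoc, smul_neg,
        ← NormedSpace.exp_add_of_commute (Commute.neg_right (Commute.refl (y • L))),
        add_neg_cancel, NormedSpace.exp_zero, one_mul]
    rw [← hyy, hWc, h0]
  refine ⟨L, ?_, fun q => U (q.1, 0, q.2), ?_, fun q => hUG _, fun x y t => key x y t⟩
  · rw [hLie]
    intro s
    have h := key 0 s 0
    have hexp : NormedSpace.exp (s • L) = U (0, s, 0) * Ui (0, 0, 0) := by
      calc NormedSpace.exp (s • L)
          = NormedSpace.exp (s • L) * (U (0, 0, 0) * Ui (0, 0, 0)) := by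
            rw [hUUi, mul_one]
        _ = (NormedSpace.exp (s • L) * U (0, 0, 0)) * Ui (0, 0, 0) := by rw [mul_assoc]
        _ = U (0, s, 0) * Ui (0, 0, 0) := by rw [← h]
    erw [hexp]
    exact hGmul _ (hUG _) _ (hGinv _ (hUG _)).2
  · exact hU.comp (contDiff_fst.prodMk (contDiff_const.prodMk contDiff_snd))

end
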